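/- For a non-catastrophic binary rate-1/n convolutional code with memory M explored by the FAST algorithm: if a state S (shift-register content in F_2^M) has its rightmost nonzero entry followed by m zeros, then every path in the state-transition diagram from the zero-state to S using inputs has length at least M − m, and every codeword passing through state S at time t with nonzero initial input has accumulated output weight at least d^c_{M−m−1}, the (M−m−1)-st column distance. -/
import Mathlib


open Polynomial

-- Weight of the truncation (v_0, …, v_j) of a polynomial vector.
open scoped Classical in
noncomputable def wtTrunc {F : Type*} [Field F] {n : ℕ} (v : Fin n → F[X]) (j : ℕ) : ℕ :=
  ∑ t ∈ Finset.range (j + 1), ∑ i, if (v i).coeff t ≠ 0 then 1 else 0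

/-- The j-th column distance of a convolutional code. -/
noncomputable def colDist {F : Type*} [Field F] {n : ℕ}
    (C : Submodule F[X] (Fin n → F[X])) (j : ℕ) : ℕ :=
  sInf { w | ∃ v ∈ C, (∃ i, (v i).coeff 0 ≠ 0) ∧ wtTrunc v j = w }

/-- FAST algorithm pruning rule, rate 1/n over F₂, memory M.  Suppose the codeword
generated by input u (with u_0 ≠ 0) passes at time t through the state
S = (u_{t−1}, …, u_{t−M}) whose rightmost nonzero entry (at position M−1−m) is followed
by m zeros.  Then the path from the zero-state to S has length t ≥ M − m, and the
accumulated output weight wt(v_0, …, v_{t−1}) is at least the (M−m−1)-st column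
distance. -/
theorem fast_pruning_bound {n M : ℕ} (g : Fin n → (ZMod 2)[X])
    (hdeg : ∀ j, (g j).natDegree ≤ M)
    (hg0 : ∃ j, (g j).coeff 0 ≠ 0)
    (C : Submodule (ZMod 2)[X] (Fin n → (ZMod 2)[X]))
    (hC : C = Submodule.span (ZMod 2)[X] {g})
    (u : (ZMod 2)[X]) (hu0 : u.coeff 0 ≠ 0)
    (t m : ℕ) (hm : m < M) (ht : 0 < t)
    (S : Fin M → ZMod 2)
    (hS : ∀ i : Fin M, S i = if (i : ℕ) < t then u.coeff (t - 1 - (i : ℕ)) else 0)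
    (hr : S ⟨M - 1 - m, by omega⟩ ≠ 0)
    (htrail : ∀ i : Fin M, M - 1 - m < (i : ℕ) → S i = 0) :
    M - m ≤ t ∧ colDist C (M - m - 1) ≤ wtTrunc (fun j => u * g j) (t - 1) := by
  have h1 : M - m ≤ t := by
    have := hS ⟨M - 1 - m, by omega⟩
    by_contra hlt
    simp only at this
    rw [if_neg (by omega)] at this
    exact hr this
  refine ⟨h1, ?_⟩
  have hmono : wtTrunc (fun j => u * g j) (M - m - 1) ≤ wtTrunc (fun j => u * g j) (t - 1) := by
    unfold wtTrunc
    exact Finset.sum_le_sum_of_subset (Finset.range_subset_range.2 (by omega))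
  refine le_trans (Nat.sInf_le ?_) hmono
  refine ⟨fun j => u * g j, ?_, ?_, rfl⟩
  · rw [hC]
    have : (fun j => u * g j) = u • g := by funext j; simp [smul_eq_mul]
    rw [this]
    exact Submodule.smul_mem _ u (Submodule.subset_span rfl)
  · obtain ⟨i, hi⟩ := hg0
    exact ⟨i, by simp [Polynomial.mul_coeff_zero, hu0, hi]⟩
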